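/- arXiv:2009.01024 — 3 statements merged into one kernel-verified Lean document; each statement's English description precedes it below -/
import Mathlib

section
/- The number of matchings of [2n] avoiding the pattern 1122 (i.e., permutational matchings) equals n!. -/
/-- A (perfect) matching on `Fin m`: a fixed-point-free involution. -/
def IsMatching {m : ℕ} (f : Fin m → Fin m) : Prop :=
  Function.Involutive f ∧ ∀ i, f i ≠ i

/-- The pattern `σ` occurs in `τ`. -/
def Occurs {m M : ℕ} (σ : Fin m → Fin m) (τ : Fin M → Fin M) : Prop :=
  ∃ g : Fin m → Fin M, StrictMono g ∧ ∀ p, τ (g p) = g (σ p)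

def Avoids {m M : ℕ} (σ : Fin m → Fin m) (τ : Fin M → Fin M) : Prop :=
  ¬ Occurs σ τ

def juxt {m M : ℕ} (σ : Fin m → Fin m) (τ : Fin M → Fin M) :
    Fin (m + M) → Fin (m + M) :=
  fun i => finSumFinEquiv (Sum.map σ τ (finSumFinEquiv.symm i))

def liftMatching {m : ℕ} (σ : Fin m → Fin m) : Fin (m + 2) → Fin (m + 2) := fun i =>
  if _ : i.val = 0 then ⟨m + 1, by omega⟩
  else if _ : i.val = m + 1 then ⟨0, by omega⟩
  else ⟨(σ ⟨i.val - 1, by have := i.isLt; omega⟩).val + 1, by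
    have := (σ ⟨i.val - 1, by have := i.isLt; omega⟩).isLt; omega⟩

/-- `τ` contains `σ`, but deleting the rightmost edge of `τ` (the edge containing the
last vertex) destroys every occurrence of `σ`. -/
def MinContains {m M : ℕ} (σ : Fin m → Fin m) (τ : Fin M → Fin M) : Prop :=
  Occurs σ τ ∧ ¬ ∃ g : Fin m → Fin M, StrictMono g ∧ (∀ p, τ (g p) = g (σ p)) ∧
    ∀ p, (g p : ℕ) ≠ M - 1 ∧ (τ (g p) : ℕ) ≠ M - 1

def ConnectedMatching {m : ℕ} (f : Fin m → Fin m) : Prop :=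
  0 < m ∧ ¬ ∃ h : ℕ, 0 < h ∧ h < m ∧ ∀ i : Fin m, ((i : ℕ) < h ↔ ((f i : ℕ) < h))

def HasCrossing {m : ℕ} (f : Fin m → Fin m) : Prop :=
  ∃ a b : Fin m, a < b ∧ b < f a ∧ f a < f b

def p1122 : Fin 4 → Fin 4 := ![1, 0, 3, 2]
def p1212 : Fin 4 → Fin 4 := ![2, 3, 0, 1]
def p1221 : Fin 4 → Fin 4 := ![3, 2, 1, 0]



lemma occurs_iff {M : ℕ} (f : Fin M → Fin M) (hf : Function.Involutive f) :
    Occurs p1122 f ↔ ∃ a b : Fin M, a < f a ∧ f a < b ∧ b < f b := by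
  constructor
  · rintro ⟨g, hg, hgf⟩
    refine ⟨g 0, g 2, ?_, ?_, ?_⟩
    · rw [show f (g 0) = g 1 from hgf 0]; exact hg (by decide)
    · rw [show f (g 0) = g 1 from hgf 0]; exact hg (by decide)
    · rw [show f (g 2) = g 3 from hgf 2]; exact hg (by decide)
  · rintro ⟨a, b, h1, h2, h3⟩
    refine ⟨![a, f a, b, f b], ?_, ?_⟩
    · intro i j hij
      fin_cases i <;> fin_cases j <;>
        simp_all <;> first | exact h1.trans h2 | exact (h1.trans h2).trans h3 | exact h2.trans h3
    · intro p
      fin_cases p <;> simp [p1122, hf a, hf b]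


lemma perm_of_nosep (n : ℕ) (f : Fin (2*n) → Fin (2*n))
    (hinv : Function.Involutive f) (hfix : ∀ i, f i ≠ i)
    (hno : ¬ ∃ a b : Fin (2*n), a < f a ∧ f a < b ∧ b < f b) :
    ∀ i : Fin (2*n), (i : ℕ) < n ↔ n ≤ (f i : ℕ) := by
  push_neg at hno
  classical
  set L : Finset (Fin (2*n)) := Finset.univ.filter (fun i => i < f i) with hL
  -- f maps L bijectively onto its complement
  have hmem : ∀ i : Fin (2*n), i ∈ L ↔ i < f i := by
    intro i; simp [hL]
  have hcompl : ∀ i : Fin (2*n), i ∉ L ↔ f i < i := by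
    intro i
    rw [hmem]
    have := hfix i
    constructor
    · intro h
      rcases lt_or_gt_of_ne (Ne.symm this) with h' | h'
      · exact absurd h' h
      · exact h'
    · intro h h'; exact absurd (h.trans h') (lt_irrefl _)
  -- card of L is n
  have hcard : L.card = n := by
    have hbij : Finset.image f L = Lᶜ := by
      ext j
      simp only [Finset.mem_image, Finset.mem_compl]
      constructor
      · rintro ⟨a, ha, rfl⟩
        rw [hcompl, hinv a]; exact (hmem a).1 ha
      · intro hj
        exact ⟨f j, (hmem _).2 (by rw [hinv j]; exact (hcompl j).1 hj), hinv j⟩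
    have hinj : Set.InjOn f L := fun a _ b _ h => hinv.injective h
    have h1 : L.card = Lᶜ.card := by
      rw [← hbij, Finset.card_image_of_injOn hinj]
    have h2 : L.card + Lᶜ.card = 2*n := by
      rw [Finset.card_add_card_compl]; simp
    omega
  -- every member of L is less than every non-member
  have hsep : ∀ a ∈ L, ∀ b : Fin (2*n), b ∉ L → a < b := by
    intro a ha b hb
    have ha' := (hmem a).1 ha
    have hb' := (hcompl b).1 hb
    by_contra hab
    push_neg at hab
    rcases eq_or_lt_of_le hab with h | h
    · subst h
      exact absurd (ha'.trans hb') (lt_irrefl _)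
    · -- b < a; edges (f b, b) and (a, f a):  f b < b ≤ ? need f b < f(f b)=b < a < f a
      have : f b < f (f b) := by rw [hinv b]; exact hb'
      have h2 : f (f b) < a := by rw [hinv b]; exact h
      exact absurd ha' (not_lt.mpr (hno (f b) a this h2))
  intro i
  constructor
  · intro hi
    -- show i ∈ L
    by_contra hge
    push_neg at hge  -- f i < n
    have hiL : i ∈ L := by
      by_contra hiL
      -- all of L is < i, so L.card ≤ i < n
      have : L ⊆ Finset.univ.filter (fun a => (a:ℕ) < (i:ℕ)) := by
        intro a ha
        simp only [Finset.mem_filter, Finset.mem_univ, true_and]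
        exact hsep a ha i hiL
      have hle : L.card ≤ (i:ℕ) := by
        calc L.card ≤ (Finset.univ.filter (fun a : Fin (2*n) => (a:ℕ) < (i:ℕ))).card :=
              Finset.card_le_card this
          _ ≤ (Finset.range (i:ℕ)).card :=
              Finset.card_le_card_of_injOn (fun a => (a:ℕ))
                (by intro a ha
                    simp only [Finset.mem_coe, Finset.mem_filter, Finset.mem_univ, true_and] at ha
                    simpa using ha)
                (by intro a _ b _ h; exact Fin.ext h)
          _ = (i:ℕ) := Finset.card_range _
      omega
    -- i ∈ L and f i ∉ L since f (f i) = i < f i means... f i ∈ L?  i < f i so f i ∉ L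
    have hfi : f i ∉ L := by
      rw [hcompl, hinv]; exact (hmem i).1 hiL
    -- all of Lᶜ is > f... we need n ≤ f i; we have f i < n (hge). f i ∉ L, and every a∈L < f i... 
    have : L ⊆ Finset.univ.filter (fun a => (a:ℕ) < ((f i):ℕ)) := by
      intro a ha
      simp only [Finset.mem_filter, Finset.mem_univ, true_and]
      exact hsep a ha (f i) hfi
    have hle : L.card ≤ ((f i):ℕ) := by
      calc L.card ≤ (Finset.univ.filter (fun a : Fin (2*n) => (a:ℕ) < ((f i):ℕ))).card :=
            Finset.card_le_card this
        _ ≤ (Finset.range ((f i):ℕ)).card :=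
            Finset.card_le_card_of_injOn (fun a => (a:ℕ))
              (by intro a ha
                  simp only [Finset.mem_coe, Finset.mem_filter, Finset.mem_univ, true_and] at ha
                  simpa using ha)
              (by intro a _ b _ h; exact Fin.ext h)
        _ = ((f i):ℕ) := Finset.card_range _
    omega
  · intro hfi
    -- n ≤ f i ⇒ i < n. Suppose n ≤ i.
    by_contra hge
    push_neg at hge  -- n ≤ i
    -- then i ∉ L and f i ∉ L? show both i, f i ≥ n are not in L... 
    -- claim: every j with n ≤ j is not in L: else L would have an element ≥ n plus...
    -- The nonmembers: Lᶜ has card n. If j ∈ L with n ≤ (j:ℕ), then Lᶜ ⊆ (j, 2n), card ≤ 2n - j - 1 ≤ n - 1 < n. contra.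
    have key : ∀ j : Fin (2*n), j ∈ L → (j:ℕ) < n := by
      intro j hj
      by_contra hj'
      push_neg at hj'
      have : Lᶜ ⊆ Finset.univ.filter (fun a => (j:ℕ) < (a:ℕ)) := by
        intro a ha
        simp only [Finset.mem_filter, Finset.mem_univ, true_and]
        exact hsep j hj a (Finset.mem_compl.mp ha)
      have hle : Lᶜ.card ≤ 2*n - ((j:ℕ) + 1) := by
        calc Lᶜ.card ≤ (Finset.univ.filter (fun a : Fin (2*n) => (j:ℕ) < (a:ℕ))).card :=
              Finset.card_le_card this
          _ ≤ (Finset.Ico ((j:ℕ)+1) (2*n)).card :=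
              Finset.card_le_card_of_injOn (fun a => (a:ℕ))
                (by intro a ha
                    simp only [Finset.mem_coe, Finset.mem_filter, Finset.mem_univ, true_and] at ha
                    simp only [Finset.mem_coe, Finset.mem_Ico]
                    exact ⟨ha, a.isLt⟩)
                (by intro a _ b _ h; exact Fin.ext h)
          _ = 2*n - ((j:ℕ)+1) := Nat.card_Ico _ _
      have hc : Lᶜ.card = n := by
        have h2 : L.card + Lᶜ.card = 2*n := by
          rw [Finset.card_add_card_compl]; simp
        omega
      have := j.isLt
      omega
    -- now: either i ∈ L or f i ∈ L
    rcases lt_or_gt_of_ne (Ne.symm (hfix i)) with h | h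
    · have := key i ((hmem i).2 h); omega
    · have hfiL : f i ∈ L := (hmem _).2 (by rw [hinv]; exact h)
      have := key _ hfiL; omega


def matchOfPerm (n : ℕ) (π : Equiv.Perm (Fin n)) : Fin (2*n) → Fin (2*n) := fun i =>
  if h : (i:ℕ) < n then
    ⟨n + (π ⟨i, h⟩ : ℕ), by have := (π ⟨i, h⟩).isLt; omega⟩
  else
    ⟨(π.symm ⟨(i:ℕ) - n, by have := i.isLt; omega⟩ : ℕ), by
      have := (π.symm ⟨(i:ℕ) - n, by have := i.isLt; omega⟩).isLt; omega⟩

lemma mop_lt {n : ℕ} (π : Equiv.Perm (Fin n)) (i : Fin (2*n)) (h : (i:ℕ) < n) :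
    (matchOfPerm n π i : ℕ) = n + (π ⟨(i:ℕ), h⟩ : ℕ) := by
  unfold matchOfPerm; rw [dif_pos h]

lemma mop_ge {n : ℕ} (π : Equiv.Perm (Fin n)) (i : Fin (2*n)) (h : ¬ (i:ℕ) < n) :
    (matchOfPerm n π i : ℕ) = (π.symm ⟨(i:ℕ) - n, by have := i.isLt; omega⟩ : ℕ) := by
  unfold matchOfPerm; rw [dif_neg h]

lemma matchOfPerm_perm (n : ℕ) (π : Equiv.Perm (Fin n)) :
    ∀ i : Fin (2*n), (i:ℕ) < n ↔ n ≤ (matchOfPerm n π i : ℕ) := by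
  intro i
  by_cases h : (i:ℕ) < n
  · rw [mop_lt π i h]
    exact iff_of_true h (by omega)
  · rw [mop_ge π i h]
    have := (π.symm ⟨(i:ℕ) - n, by have := i.isLt; omega⟩).isLt
    exact iff_of_false h (by omega)

lemma matchOfPerm_involutive (n : ℕ) (π : Equiv.Perm (Fin n)) :
    Function.Involutive (matchOfPerm n π) := by
  intro i
  apply Fin.ext
  by_cases h : (i:ℕ) < n
  · have h1 := mop_lt π i h
    have hge : ¬ ((matchOfPerm n π i : ℕ) < n) := by omega
    rw [mop_ge π _ hge]
    have e1 : (⟨(matchOfPerm n π i : ℕ) - n, by have := (matchOfPerm n π i).isLt; omega⟩ : Fin n)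
        = π ⟨(i:ℕ), h⟩ :=
      Fin.ext (show (matchOfPerm n π i : ℕ) - n = ((π ⟨(i:ℕ), h⟩ : Fin n) : ℕ) by omega)
    rw [e1, Equiv.symm_apply_apply]
  · have h1 := mop_ge π i h
    have hlt : (matchOfPerm n π i : ℕ) < n := by
      rw [h1]; exact (π.symm _).isLt
    rw [mop_lt π _ hlt]
    have e1 : (⟨(matchOfPerm n π i : ℕ), hlt⟩ : Fin n)
        = π.symm ⟨(i:ℕ) - n, by have := i.isLt; omega⟩ := Fin.ext h1
    rw [e1, Equiv.apply_symm_apply]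
    have := i.isLt
    simp only
    omega

lemma matchOfPerm_ne (n : ℕ) (π : Equiv.Perm (Fin n)) :
    ∀ i, matchOfPerm n π i ≠ i := by
  intro i h
  have hp := matchOfPerm_perm n π i
  rw [h] at hp
  omega

lemma matchOfPerm_injective (n : ℕ) : Function.Injective (matchOfPerm n) := by
  intro π π' h
  ext i
  have hlt : (i:ℕ) < 2*n := by have := i.isLt; omega
  set j : Fin (2*n) := ⟨(i:ℕ), hlt⟩ with hj
  have hjn : (j:ℕ) < n := i.isLt
  have h1 := mop_lt π j hjn
  have h2 := mop_lt π' j hjn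
  rw [h] at h1
  have h3 : (π ⟨(j:ℕ), hjn⟩ : ℕ) = (π' ⟨(j:ℕ), hjn⟩ : ℕ) := by omega
  have h4 : (⟨(j:ℕ), hjn⟩ : Fin n) = i := Fin.ext rfl
  rw [h4] at h3
  exact h3

lemma matchOfPerm_surj (n : ℕ) (f : Fin (2*n) → Fin (2*n))
    (hinv : Function.Involutive f)
    (hperm : ∀ i : Fin (2*n), (i:ℕ) < n ↔ n ≤ (f i : ℕ)) :
    ∃ π : Equiv.Perm (Fin n), matchOfPerm n π = f := by
  have hup : ∀ i : Fin n, n ≤ ((f ⟨(i:ℕ), by have := i.isLt; omega⟩ : Fin (2*n)) : ℕ) :=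
    fun i => (hperm _).1 i.isLt
  set p : Fin n → Fin n := fun i =>
    ⟨((f ⟨(i:ℕ), by have := i.isLt; omega⟩ : Fin (2*n)) : ℕ) - n, by
      have := (f ⟨(i:ℕ), by have := i.isLt; omega⟩ : Fin (2*n)).isLt; omega⟩ with hpdef
  have hpval : ∀ i : Fin n, (p i : ℕ) = ((f ⟨(i:ℕ), by have := i.isLt; omega⟩ : Fin (2*n)) : ℕ) - n :=
    fun i => rfl
  have hpinj : Function.Injective p := by
    intro a b hab
    have h1 := hup a
    have h2 := hup b
    have hv : (p a : ℕ) = (p b : ℕ) := congrArg Fin.val hab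
    rw [hpval a, hpval b] at hv
    have h3 : ((f ⟨(a:ℕ), by have := a.isLt; omega⟩ : Fin (2*n)) : ℕ)
        = ((f ⟨(b:ℕ), by have := b.isLt; omega⟩ : Fin (2*n)) : ℕ) := by omega
    have h4 : (⟨(a:ℕ), by have := a.isLt; omega⟩ : Fin (2*n)) =
        (⟨(b:ℕ), by have := b.isLt; omega⟩ : Fin (2*n)) :=
      hinv.injective (Fin.ext h3)
    rw [Fin.mk.injEq] at h4
    exact Fin.ext h4
  have hpbij := Finite.injective_iff_bijective.mp hpinj
  refine ⟨Equiv.ofBijective p hpbij, ?_⟩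
  funext i
  apply Fin.ext
  by_cases h : (i:ℕ) < n
  · rw [mop_lt _ i h]
    have : (Equiv.ofBijective p hpbij ⟨(i:ℕ), h⟩ : ℕ) = (p ⟨(i:ℕ), h⟩ : ℕ) := rfl
    rw [this, hpval]
    have h3 : (⟨((⟨(i:ℕ), h⟩ : Fin n):ℕ), by have := i.isLt; omega⟩ : Fin (2*n)) = i := Fin.ext rfl
    rw [h3]
    have := (hperm i).1 h
    omega
  · have hfi : ((f i):ℕ) < n := by
      by_contra h'
      push_neg at h'
      exact h ((hperm i).2 h')
    rw [mop_ge _ i h]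
    have key : Equiv.ofBijective p hpbij ⟨((f i):ℕ), hfi⟩
        = ⟨(i:ℕ) - n, by have := i.isLt; omega⟩ := by
      apply Fin.ext
      have : (Equiv.ofBijective p hpbij ⟨((f i):ℕ), hfi⟩ : ℕ) = (p ⟨((f i):ℕ), hfi⟩ : ℕ) := rfl
      rw [this, hpval]
      have h3 : (⟨((⟨((f i):ℕ), hfi⟩ : Fin n):ℕ), by have := (f i).isLt; omega⟩ : Fin (2*n)) = f i :=
        Fin.ext rfl
      rw [h3, hinv i]
    have key2 : (Equiv.ofBijective p hpbij).symm ⟨(i:ℕ) - n, by have := i.isLt; omega⟩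
        = ⟨((f i):ℕ), hfi⟩ := by
      rw [← key, Equiv.symm_apply_apply]
    rw [key2]

lemma nosep_of_perm (n : ℕ) (f : Fin (2*n) → Fin (2*n))
    (hperm : ∀ i : Fin (2*n), (i:ℕ) < n ↔ n ≤ (f i : ℕ)) :
    ¬ ∃ a b : Fin (2*n), a < f a ∧ f a < b ∧ b < f b := by
  rintro ⟨a, b, h1, h2, h3⟩
  have ha := hperm a
  have hb := hperm b
  rw [Fin.lt_def] at h1 h2 h3
  omega

theorem card_avoid_1122' (n : ℕ) :
    Nat.card {f : Fin (2 * n) → Fin (2 * n) // IsMatching f ∧ Avoids p1122 f} =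
      Nat.factorial n := by
  have hbij : Function.Bijective
      (fun π : Equiv.Perm (Fin n) =>
        (⟨matchOfPerm n π, ⟨⟨matchOfPerm_involutive n π, matchOfPerm_ne n π⟩, by
          rw [Avoids, occurs_iff _ (matchOfPerm_involutive n π)]
          exact nosep_of_perm n _ (matchOfPerm_perm n π)⟩⟩ :
        {f : Fin (2 * n) → Fin (2 * n) // IsMatching f ∧ Avoids p1122 f})) := by
    constructor
    · intro π π' h
      exact matchOfPerm_injective n (congrArg Subtype.val h)
    · rintro ⟨f, ⟨hinv, hne⟩, hav⟩
      have hno : ¬ ∃ a b : Fin (2*n), a < f a ∧ f a < b ∧ b < f b := by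
        rw [Avoids, occurs_iff _ hinv] at hav
        exact hav
      have hperm := perm_of_nosep n f hinv hne hno
      obtain ⟨π, hπ⟩ := matchOfPerm_surj n f hinv hperm
      exact ⟨π, Subtype.ext hπ⟩
  rw [← Nat.card_eq_of_bijective _ hbij, Nat.card_eq_fintype_card,
    Fintype.card_perm, Fintype.card_fin]

theorem card_avoid_1122 (n : ℕ) :
    Nat.card {f : Fin (2 * n) → Fin (2 * n) // IsMatching f ∧ Avoids p1122 f} =
      Nat.factorial n := by
  exact card_avoid_1122' n
end

section
/- The number of matchings of [2n] avoiding the pattern 1221 equals the Catalan number C_n = (1/(n+1))·binom(2n,n). -/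
section AuxNN
open List DyckStep Finset

lemma count_take_ofFn' {m : ℕ} (g : Fin m → DyckStep) (s : DyckStep) (i : ℕ) :
    ((List.ofFn g).take i).count s =
      (Finset.univ.filter fun j : Fin m => (j : ℕ) < i ∧ g j = s).card := by
  induction i with
  | zero => simp
  | succ i ih =>
    by_cases him : i < m
    · rw [List.take_succ, List.count_append, ih]
      have hget : (List.ofFn g)[i]? = some (g ⟨i, him⟩) := by
        rw [List.getElem?_eq_getElem (by simpa using him)]
        simp
      rw [hget]
      have hsplit : (Finset.univ.filter fun j : Fin m => (j : ℕ) < i + 1 ∧ g j = s) =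
          (Finset.univ.filter fun j : Fin m => (j : ℕ) < i ∧ g j = s) ∪
          (Finset.univ.filter fun j : Fin m => j = ⟨i, him⟩ ∧ g j = s) := by
        ext j
        simp only [Finset.mem_filter, Finset.mem_union, Finset.mem_univ, true_and]
        constructor
        · rintro ⟨h1, h2⟩
          rcases Nat.lt_succ_iff_lt_or_eq.mp h1 with h | h
          · exact Or.inl ⟨h, h2⟩
          · exact Or.inr ⟨Fin.ext h, h2⟩
        · rintro (⟨h1, h2⟩ | ⟨h1, h2⟩)
          · exact ⟨Nat.lt_succ_of_lt h1, h2⟩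
          · exact ⟨by simp [h1], h2⟩
      rw [hsplit, Finset.card_union_of_disjoint]
      · congr 1
        by_cases hg : g ⟨i, him⟩ = s
        · rw [Finset.card_eq_one.mpr ⟨⟨i, him⟩, by ext j; simp [hg]; rintro rfl; exact hg⟩]
          simp [hg]
        · rw [Finset.card_eq_zero.mpr (by ext j; simp only [Finset.mem_filter, Finset.mem_univ, true_and, Finset.notMem_empty, iff_false, not_and]; rintro rfl; exact hg)]
          simp [List.count_singleton', hg, Ne.symm hg]
      · rw [Finset.disjoint_left]
        intro a ha hb
        simp only [Finset.mem_filter, Finset.mem_univ, true_and] at ha hb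
        obtain ⟨h1, -⟩ := ha; obtain ⟨rfl, -⟩ := hb
        simp at h1
    · have h1 : (List.ofFn g).take (i+1) = (List.ofFn g).take i := by
        rw [List.take_of_length_le (by simp; omega), List.take_of_length_le (by simp; omega)]
      rw [h1, ih]
      congr 1
      ext j
      have := j.isLt
      simp only [Finset.mem_filter]
      constructor <;> rintro ⟨h1, h2, h3⟩ <;> exact ⟨h1, by omega, h3⟩


lemma avoids_iff {m : ℕ} {f : Fin m → Fin m} (hf : IsMatching f) :
    Avoids p1221 f ↔ ∀ a b : Fin m, a < f a → b < f b → a < b → f a < f b := by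
  obtain ⟨hinv, hfix⟩ := hf
  constructor
  · intro hav a b ha hb hab
    by_contra hcon
    have hne : f a ≠ f b := fun h => absurd (hinv.injective h) (Fin.ne_of_lt hab)
    have hlt : f b < f a := lt_of_le_of_ne (le_of_not_gt hcon) (Ne.symm hne)
    apply hav
    refine ⟨![a, b, f b, f a], ?_, ?_⟩
    · rw [Fin.strictMono_iff_lt_succ]
      intro i
      fin_cases i <;>
        simp only [Fin.castSucc, Fin.succ, Fin.castAdd, Fin.castLE, Fin.isValue] <;>
        first
        | exact hab
        | exact hb
        | exact hlt
    · intro p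
      fin_cases p <;> simp [p1221, hinv a, hinv b]
  · intro hmono ⟨g, hg, hocc⟩
    have h0 : f (g 0) = g 3 := hocc 0
    have h1 : f (g 1) = g 2 := hocc 1
    have l01 : g 0 < g 1 := hg (by decide)
    have l12 : g 1 < g 2 := hg (by decide)
    have l23 : g 2 < g 3 := hg (by decide)
    have := hmono (g 0) (g 1) (by rw [h0]; exact l01.trans (l12.trans l23)) (by rw [h1]; exact l12) l01
    rw [h0, h1] at this
    exact absurd l23 (not_lt.mpr this.le)


/-- word function of a matching -/
def wordFn {m : ℕ} (f : Fin m → Fin m) : Fin m → DyckStep :=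
  fun i => if i < f i then U else D

lemma wordFn_eq_U {m : ℕ} {f : Fin m → Fin m} {i : Fin m} :
    wordFn f i = U ↔ i < f i := by
  unfold wordFn; split_ifs with h <;> simp [h]

lemma wordFn_eq_D {m : ℕ} {f : Fin m → Fin m} (hf : IsMatching f) {i : Fin m} :
    wordFn f i = D ↔ f i < i := by
  unfold wordFn; split_ifs with h <;> simp [h]
  · omega
  · rcases lt_trichotomy (f i) i with h' | h' | h'
    · exact h'
    · exact absurd h' (hf.2 i)
    · exact absurd h' h

lemma closer_of_opener {m : ℕ} {f : Fin m → Fin m} (hf : IsMatching f) {i : Fin m}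
    (h : i < f i) : f (f i) < f i := by rw [hf.1 i]; exact h

lemma opener_of_closer {m : ℕ} {f : Fin m → Fin m} (hf : IsMatching f) {i : Fin m}
    (h : f i < i) : f i < f (f i) := by rw [hf.1 i]; exact h

lemma card_open_close {m : ℕ} {f : Fin m → Fin m} (hf : IsMatching f) (i : ℕ) :
    (Finset.univ.filter fun j : Fin m => (j : ℕ) < i ∧ f j < j).card ≤
      (Finset.univ.filter fun j : Fin m => (j : ℕ) < i ∧ j < f j).card := by
  apply Finset.card_le_card_of_injOn f
  · intro j hj
    simp only [Finset.mem_filter, Finset.mem_univ, true_and, Finset.mem_coe] at hj ⊢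
    exact ⟨lt_of_lt_of_le (Fin.lt_def.mp hj.2) (by omega), opener_of_closer hf hj.2⟩
  · intro a _ b _ hab
    exact hf.1.injective hab

lemma card_eq_open_close {m : ℕ} {f : Fin m → Fin m} (hf : IsMatching f) :
    (Finset.univ.filter fun j : Fin m => j < f j).card =
      (Finset.univ.filter fun j : Fin m => f j < j).card := by
  apply Finset.card_bij' (fun a _ => f a) (fun a _ => f a)
  · intro a ha
    simp only [Finset.mem_filter, Finset.mem_univ, true_and] at ha ⊢
    exact closer_of_opener hf ha
  · intro a ha
    simp only [Finset.mem_filter, Finset.mem_univ, true_and] at ha ⊢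
    exact opener_of_closer hf ha
  · intro a _; exact hf.1 a
  · intro a _; exact hf.1 a

/-- the Dyck word of a matching -/
def matchWord {m : ℕ} (f : Fin m → Fin m) (hf : IsMatching f) : DyckWord where
  toList := List.ofFn (wordFn f)
  count_U_eq_count_D := by
    have hU := count_take_ofFn' (wordFn f) U m
    have hD := count_take_ofFn' (wordFn f) D m
    rw [List.take_of_length_le (by simp)] at hU hD
    rw [hU, hD]
    have e1 : (Finset.univ.filter fun j : Fin m => (j : ℕ) < m ∧ wordFn f j = U) =
        Finset.univ.filter fun j : Fin m => j < f j := by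
      apply Finset.filter_congr; intro j _; simp [j.isLt, wordFn_eq_U]
    have e2 : (Finset.univ.filter fun j : Fin m => (j : ℕ) < m ∧ wordFn f j = D) =
        Finset.univ.filter fun j : Fin m => f j < j := by
      apply Finset.filter_congr; intro j _; simp [j.isLt, wordFn_eq_D hf]
    rw [e1, e2, card_eq_open_close hf]
  count_D_le_count_U i := by
    rw [count_take_ofFn', count_take_ofFn']
    have e1 : (Finset.univ.filter fun j : Fin m => (j : ℕ) < i ∧ wordFn f j = U) =
        Finset.univ.filter fun j : Fin m => (j : ℕ) < i ∧ j < f j := by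
      apply Finset.filter_congr; intro j _; simp [wordFn_eq_U]
    have e2 : (Finset.univ.filter fun j : Fin m => (j : ℕ) < i ∧ wordFn f j = D) =
        Finset.univ.filter fun j : Fin m => (j : ℕ) < i ∧ f j < j := by
      apply Finset.filter_congr; intro j _; simp [wordFn_eq_D hf]
    rw [e1, e2]
    exact card_open_close hf i

lemma semilength_matchWord {n : ℕ} (f : Fin (2 * n) → Fin (2 * n)) (hf : IsMatching f) :
    (matchWord f hf).semilength = n := by
  have hU := count_take_ofFn' (wordFn f) U (2 * n)
  rw [List.take_of_length_le (by simp)] at hU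
  have e1 : (Finset.univ.filter fun j : Fin (2*n) => (j : ℕ) < 2*n ∧ wordFn f j = U) =
      Finset.univ.filter fun j : Fin (2*n) => j < f j := by
    apply Finset.filter_congr; intro j _; simp [j.isLt, wordFn_eq_U]
  have key : (Finset.univ.filter fun j : Fin (2*n) => j < f j).card +
      (Finset.univ.filter fun j : Fin (2*n) => f j < j).card = 2 * n := by
    rw [← Finset.card_union_of_disjoint]
    · rw [show ((Finset.univ.filter fun j : Fin (2*n) => j < f j) ∪
          (Finset.univ.filter fun j : Fin (2*n) => f j < j)) = Finset.univ from ?_]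
      · simp
      · ext j
        simp only [Finset.mem_union, Finset.mem_filter, Finset.mem_univ, true_and, iff_true]
        rcases lt_trichotomy j (f j) with h | h | h
        · exact Or.inl h
        · exact absurd h.symm (hf.2 j)
        · exact Or.inr h
    · rw [Finset.disjoint_left]
      intro a ha hb
      simp only [Finset.mem_filter, Finset.mem_univ, true_and] at ha hb
      exact absurd (ha.trans hb) (lt_irrefl a)
  have := card_eq_open_close hf
  unfold DyckWord.semilength matchWord
  simp only
  rw [hU, e1]
  omega

/-- injectivity -/
lemma matching_word_inj {m : ℕ} {f f' : Fin m → Fin m} (hf : IsMatching f) (hf' : IsMatching f')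
    (hmono : ∀ a b : Fin m, a < f a → b < f b → a < b → f a < f b)
    (hmono' : ∀ a b : Fin m, a < f' a → b < f' b → a < b → f' a < f' b)
    (hw : wordFn f = wordFn f') : f = f' := by
  have hopen : ∀ i : Fin m, i < f i ↔ i < f' i := by
    intro i
    rw [← wordFn_eq_U (f := f), ← wordFn_eq_U (f := f'), hw]
  set s : Finset (Fin m) := Finset.univ.filter fun j => j < f j with hs
  set t : Finset (Fin m) := Finset.univ.filter fun j => f j < j with ht
  have hts : t.card = s.card := (card_eq_open_close hf).symm
  have ht' : (Finset.univ.filter fun j : Fin m => f' j < j) = t := by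
    ext j
    simp only [ht, Finset.mem_filter, Finset.mem_univ, true_and]
    constructor
    · intro h
      rcases lt_trichotomy (f j) j with h2 | h2 | h2
      · exact h2
      · exact absurd h2 (hf.2 j)
      · exact absurd ((hopen j).mp h2) (by omega)
    · intro h
      rcases lt_trichotomy (f' j) j with h2 | h2 | h2
      · exact h2
      · exact absurd h2 (hf'.2 j)
      · exact absurd ((hopen j).mpr h2) (by omega)
  have hs' : (Finset.univ.filter fun j : Fin m => j < f' j) = s := by
    ext j; simp only [hs, Finset.mem_filter, Finset.mem_univ, true_and]; exact (hopen j).symm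
  -- the restriction of f to s equals orderEmbOfFin of t
  have hmemS : ∀ j, j ∈ s ↔ j < f j := by intro j; rw [hs]; simp
  have hmemS' : ∀ j, j ∈ s ↔ j < f' j := by intro j; rw [← hs']; simp
  have hmemT : ∀ j, j ∈ t ↔ f j < j := by intro j; rw [ht]; simp
  have hmemT' : ∀ j, j ∈ t ↔ f' j < j := by intro j; rw [← ht']; simp
  have hemb : ∀ g : Fin m → Fin m, IsMatching g →
      (∀ a b : Fin m, a < g a → b < g b → a < b → g a < g b) →
      (∀ j, j ∈ s ↔ j < g j) →
      (∀ j, j ∈ t ↔ g j < j) →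
      ∀ i (hi : i ∈ s), g i = t.orderEmbOfFin hts ((s.orderIsoOfFin rfl).symm ⟨i, hi⟩) := by
    intro g hg hgmono hgs hgt i hi
    have key : (fun k => g (s.orderEmbOfFin rfl k)) = t.orderEmbOfFin hts := by
      apply Finset.orderEmbOfFin_unique
      · intro x
        have hx := (hgs _).mp (Finset.orderEmbOfFin_mem s rfl x)
        exact (hgt _).mpr (closer_of_opener hg hx)
      · intro a b hab
        have ha := (hgs _).mp (Finset.orderEmbOfFin_mem s rfl a)
        have hb := (hgs _).mp (Finset.orderEmbOfFin_mem s rfl b)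
        exact hgmono _ _ ha hb ((s.orderEmbOfFin rfl).strictMono hab)
    have hi' : s.orderEmbOfFin rfl ((s.orderIsoOfFin rfl).symm ⟨i, hi⟩) = i := by
      rw [← Finset.coe_orderIsoOfFin_apply, OrderIso.apply_symm_apply]
    conv_lhs => rw [← hi']
    exact congrFun key _
  funext i
  by_cases hi : i ∈ s
  · rw [hemb f hf hmono hmemS hmemT i hi, hemb f' hf' hmono' hmemS' hmemT' i hi]
  · have hit : i ∈ t := by
      rw [hmemS, not_lt] at hi
      exact (hmemT i).mpr (lt_of_le_of_ne hi (hf.2 i))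
    have hfi : f i ∈ s := (hmemS _).mpr (opener_of_closer hf ((hmemT i).mp hit))
    have : f (f i) = f' (f i) := by
      rw [hemb f hf hmono hmemS hmemT _ hfi, hemb f' hf' hmono' hmemS' hmemT' _ hfi]
    rw [hf.1 i] at this
    have := congrArg f' this
    rw [hf'.1] at this
    rw [← this]


section surj
variable {n : ℕ}

lemma dw_len (p : DyckWord) (hp : p.semilength = n) : p.toList.length = 2 * n := by
  rw [← p.two_mul_semilength_eq_length, hp]

/-- entries of p as a function on Fin (2n) -/
noncomputable def dwFn (p : DyckWord) (hp : p.semilength = n) : Fin (2 * n) → DyckStep :=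
  fun i => p.toList.get (Fin.cast (dw_len p hp).symm i)

lemma ofFn_dwFn (p : DyckWord) (hp : p.semilength = n) : List.ofFn (dwFn p hp) = p.toList := by
  apply List.ext_get (by simp [dw_len p hp])
  intro i h1 h2
  simp [dwFn]

lemma card_dwU (p : DyckWord) (hp : p.semilength = n) : (Finset.univ.filter fun j : Fin (2*n) => dwFn p hp j = U).card = n := by
  have hU := count_take_ofFn' (dwFn p hp) U (2 * n)
  rw [List.take_of_length_le (by simp), ofFn_dwFn] at hU
  have : p.toList.count U = n := by rw [← hp]; rfl
  rw [this] at hU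
  have e : (Finset.univ.filter fun j : Fin (2*n) => dwFn p hp j = U) =
      (Finset.univ.filter fun j : Fin (2*n) => (j:ℕ) < 2*n ∧ dwFn p hp j = U) := by
    apply Finset.filter_congr; intro j _; simp [j.isLt]
  rw [e]; exact hU.symm

lemma card_dwD (p : DyckWord) (hp : p.semilength = n) : (Finset.univ.filter fun j : Fin (2*n) => dwFn p hp j = D).card = n := by
  have hU := count_take_ofFn' (dwFn p hp) D (2 * n)
  rw [List.take_of_length_le (by simp), ofFn_dwFn] at hU
  have : p.toList.count D = n := by rw [← hp, DyckWord.semilength_eq_count_D]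
  rw [this] at hU
  have e : (Finset.univ.filter fun j : Fin (2*n) => dwFn p hp j = D) =
      (Finset.univ.filter fun j : Fin (2*n) => (j:ℕ) < 2*n ∧ dwFn p hp j = D) := by
    apply Finset.filter_congr; intro j _; simp [j.isLt]
  rw [e]; exact hU.symm

/-- the key: k-th opener comes before k-th closer -/
lemma opener_lt_closer (p : DyckWord) (hp : p.semilength = n) (k : Fin n) :
    ((Finset.univ.filter fun j : Fin (2*n) => dwFn p hp j = U).orderEmbOfFin (card_dwU p hp) k : Fin (2*n)) <
      (Finset.univ.filter fun j : Fin (2*n) => dwFn p hp j = D).orderEmbOfFin (card_dwD p hp) k := by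
  set s := Finset.univ.filter fun j : Fin (2*n) => dwFn p hp j = U with hsdef
  set t := Finset.univ.filter fun j : Fin (2*n) => dwFn p hp j = D with htdef
  set a := s.orderEmbOfFin (card_dwU p hp) k with hadef
  set b := t.orderEmbOfFin (card_dwD p hp) k with hbdef
  by_contra hcon
  push_neg at hcon
  have hab : b < a := by
    rcases lt_or_eq_of_le hcon with h | h
    · exact h
    · exfalso
      have h1 : a ∈ s := Finset.orderEmbOfFin_mem _ _ _
      have h2 : b ∈ t := Finset.orderEmbOfFin_mem _ _ _
      rw [h] at h2
      rw [hsdef] at h1; rw [htdef] at h2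
      simp only [Finset.mem_filter] at h1 h2
      rw [h1.2] at h2
      exact absurd h2.2 (by simp)
  -- count D in prefix of length b+1 is at least k+1
  have hD : (k : ℕ) + 1 ≤
      (Finset.univ.filter fun j : Fin (2*n) => (j:ℕ) < (b:ℕ) + 1 ∧ dwFn p hp j = D).card := by
    calc (k : ℕ) + 1 = ((Finset.univ : Finset (Fin ((k:ℕ)+1))).card) := by simp
    _ ≤ (Finset.univ.filter fun j : Fin (2*n) => (j:ℕ) < (b:ℕ) + 1 ∧ dwFn p hp j = D).card :=
      Finset.card_le_card_of_injOn
        (fun j => t.orderEmbOfFin (card_dwD p hp) ⟨(j:ℕ), by omega⟩)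
        (fun j _ => by
          simp only [Finset.mem_filter, Finset.mem_univ, true_and, Finset.mem_coe]
          constructor
          · have hle : t.orderEmbOfFin (card_dwD p hp) ⟨(j:ℕ), by omega⟩ ≤ b := by
              rw [hbdef]
              apply (t.orderEmbOfFin (card_dwD p hp)).monotone
              have := j.isLt; exact Fin.mk_le_mk.mpr (by omega)
            exact Nat.lt_succ_of_le hle
          · have hmem := Finset.orderEmbOfFin_mem t (card_dwD p hp) ⟨(j:ℕ), by omega⟩
            exact (Finset.mem_filter.mp hmem).2)
        (fun x _ y _ hxy => by
          have := (t.orderEmbOfFin (card_dwD p hp)).injective hxy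
          simpa [Fin.ext_iff] using congrArg Fin.val this)
  -- count U in prefix of length b+1 is at most k
  have hU : (Finset.univ.filter fun j : Fin (2*n) => (j:ℕ) < (b:ℕ) + 1 ∧ dwFn p hp j = U).card
      ≤ (k : ℕ) := by
    have step : ∀ j ∈ (Finset.univ.filter fun j : Fin (2*n) => (j:ℕ) < (b:ℕ) + 1 ∧ dwFn p hp j = U),
        (fun j => if h : j ∈ s then (s.orderIsoOfFin (card_dwU p hp)).symm ⟨j, h⟩ else k) j ∈
          Finset.Iio k :=
      (fun j hj => by
          simp only [Finset.mem_filter, Finset.mem_univ, true_and] at hj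
          have hjs : j ∈ s := by rw [hsdef]; simp [hj.2]
          beta_reduce
          rw [dif_pos hjs]
          rw [Finset.mem_Iio]
          have hja : j < a := by
            have : (j:ℕ) < (a:ℕ) := by omega
            exact this
          by_contra hcon2
          push_neg at hcon2
          have : a ≤ j := by
            calc a = s.orderEmbOfFin (card_dwU p hp) k := rfl
            _ ≤ s.orderEmbOfFin (card_dwU p hp) ((s.orderIsoOfFin (card_dwU p hp)).symm ⟨j, hjs⟩) :=
                (s.orderEmbOfFin (card_dwU p hp)).monotone hcon2
            _ = j := by rw [← Finset.coe_orderIsoOfFin_apply, OrderIso.apply_symm_apply]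
          exact absurd hja (not_lt.mpr this))
    have injstep : Set.InjOn
        (fun j => if h : j ∈ s then (s.orderIsoOfFin (card_dwU p hp)).symm ⟨j, h⟩ else k)
        ((Finset.univ.filter fun j : Fin (2*n) => (j:ℕ) < (b:ℕ) + 1 ∧ dwFn p hp j = U) : Finset (Fin (2*n))) :=
      (fun x hx y hy hxy => by
          simp only [Finset.mem_filter, Finset.mem_univ, true_and, Finset.mem_coe] at hx hy
          have hxs : x ∈ s := by rw [hsdef]; simp [hx.2]
          have hys : y ∈ s := by rw [hsdef]; simp [hy.2]
          beta_reduce at hxy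
          rw [dif_pos hxs, dif_pos hys] at hxy
          have := congrArg (s.orderIsoOfFin (card_dwU p hp)) hxy
          rw [OrderIso.apply_symm_apply, OrderIso.apply_symm_apply] at this
          exact congrArg Subtype.val this)
    have := Finset.card_le_card_of_injOn _ step injstep
    rwa [Fin.card_Iio] at this
  -- now contradiction with the Dyck property
  have hdyck := p.count_D_le_count_U ((b:ℕ) + 1)
  rw [← ofFn_dwFn p hp, count_take_ofFn', count_take_ofFn'] at hdyck
  omega
end surj

section buildMatch
variable {n : ℕ}

/-- The nonnesting matching associated to a Dyck word. -/
noncomputable def dwMatch (p : DyckWord) (hp : p.semilength = n) :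
    Fin (2 * n) → Fin (2 * n) := fun i =>
  if h : dwFn p hp i = U then
    (Finset.univ.filter fun j : Fin (2*n) => dwFn p hp j = D).orderEmbOfFin (card_dwD p hp)
      (((Finset.univ.filter fun j : Fin (2*n) => dwFn p hp j = U).orderIsoOfFin
        (card_dwU p hp)).symm ⟨i, by simp [h]⟩)
  else
    (Finset.univ.filter fun j : Fin (2*n) => dwFn p hp j = U).orderEmbOfFin (card_dwU p hp)
      (((Finset.univ.filter fun j : Fin (2*n) => dwFn p hp j = D).orderIsoOfFin
        (card_dwD p hp)).symm ⟨i, by simp [(DyckStep.dichotomy (dwFn p hp i)).resolve_left h]⟩)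

lemma dwMatch_of_U (p : DyckWord) (hp : p.semilength = n) {i : Fin (2*n)}
    (h : dwFn p hp i = U) :
    dwMatch p hp i =
      (Finset.univ.filter fun j : Fin (2*n) => dwFn p hp j = D).orderEmbOfFin (card_dwD p hp)
      (((Finset.univ.filter fun j : Fin (2*n) => dwFn p hp j = U).orderIsoOfFin
        (card_dwU p hp)).symm ⟨i, by simp [h]⟩) := by
  unfold dwMatch; rw [dif_pos h]

lemma dwMatch_of_D (p : DyckWord) (hp : p.semilength = n) {i : Fin (2*n)}
    (h : dwFn p hp i = D) :
    dwMatch p hp i =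
      (Finset.univ.filter fun j : Fin (2*n) => dwFn p hp j = U).orderEmbOfFin (card_dwU p hp)
      (((Finset.univ.filter fun j : Fin (2*n) => dwFn p hp j = D).orderIsoOfFin
        (card_dwD p hp)).symm ⟨i, by simp [h]⟩) := by
  unfold dwMatch
  rw [dif_neg (by simp [h])]

lemma dwFn_dwMatch_U (p : DyckWord) (hp : p.semilength = n) {i : Fin (2*n)}
    (h : dwFn p hp i = U) : dwFn p hp (dwMatch p hp i) = D := by
  rw [dwMatch_of_U p hp h]
  have := Finset.orderEmbOfFin_mem
    (Finset.univ.filter fun j : Fin (2*n) => dwFn p hp j = D) (card_dwD p hp)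
    (((Finset.univ.filter fun j : Fin (2*n) => dwFn p hp j = U).orderIsoOfFin
        (card_dwU p hp)).symm ⟨i, by simp [h]⟩)
  exact (Finset.mem_filter.mp this).2

lemma dwFn_dwMatch_D (p : DyckWord) (hp : p.semilength = n) {i : Fin (2*n)}
    (h : dwFn p hp i = D) : dwFn p hp (dwMatch p hp i) = U := by
  rw [dwMatch_of_D p hp h]
  have := Finset.orderEmbOfFin_mem
    (Finset.univ.filter fun j : Fin (2*n) => dwFn p hp j = U) (card_dwU p hp)
    (((Finset.univ.filter fun j : Fin (2*n) => dwFn p hp j = D).orderIsoOfFin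
        (card_dwD p hp)).symm ⟨i, by simp [h]⟩)
  exact (Finset.mem_filter.mp this).2

lemma emb_symm_eq {α : Type*} [LinearOrder α] (s : Finset α) {k : ℕ} (h : s.card = k)
    (x : Fin k) :
    (s.orderIsoOfFin h).symm ⟨s.orderEmbOfFin h x, Finset.orderEmbOfFin_mem s h x⟩ = x := by
  apply (s.orderIsoOfFin h).injective
  rw [OrderIso.apply_symm_apply]
  apply Subtype.ext
  rw [Finset.coe_orderIsoOfFin_apply]

lemma emb_symm_eq' {α : Type*} [LinearOrder α] (s : Finset α) {k : ℕ} (h : s.card = k)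
    (x : α) (hx : x ∈ s) : (s.orderEmbOfFin h ((s.orderIsoOfFin h).symm ⟨x, hx⟩)) = x := by
  rw [← Finset.coe_orderIsoOfFin_apply, OrderIso.apply_symm_apply]

lemma dwMatch_involutive (p : DyckWord) (hp : p.semilength = n) :
    Function.Involutive (dwMatch p hp) := by
  intro i
  rcases DyckStep.dichotomy (dwFn p hp i) with h | h
  · have h2 := dwFn_dwMatch_U p hp h
    rw [dwMatch_of_D p hp h2]
    have e1 : ((Finset.univ.filter fun j : Fin (2*n) => dwFn p hp j = D).orderIsoOfFin
          (card_dwD p hp)).symm ⟨dwMatch p hp i, by simp [h2]⟩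
        = ((Finset.univ.filter fun j : Fin (2*n) => dwFn p hp j = U).orderIsoOfFin
          (card_dwU p hp)).symm ⟨i, by simp [h]⟩ := by
      apply (((Finset.univ.filter fun j : Fin (2*n) => dwFn p hp j = D).orderIsoOfFin
        (card_dwD p hp))).injective
      rw [OrderIso.apply_symm_apply]
      apply Subtype.ext
      rw [Finset.coe_orderIsoOfFin_apply]
      exact dwMatch_of_U p hp h
    rw [e1]
    exact emb_symm_eq' _ _ i (by simp [h])
  · have h2 := dwFn_dwMatch_D p hp h
    rw [dwMatch_of_U p hp h2]
    have e1 : ((Finset.univ.filter fun j : Fin (2*n) => dwFn p hp j = U).orderIsoOfFin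
          (card_dwU p hp)).symm ⟨dwMatch p hp i, by simp [h2]⟩
        = ((Finset.univ.filter fun j : Fin (2*n) => dwFn p hp j = D).orderIsoOfFin
          (card_dwD p hp)).symm ⟨i, by simp [h]⟩ := by
      apply (((Finset.univ.filter fun j : Fin (2*n) => dwFn p hp j = U).orderIsoOfFin
        (card_dwU p hp))).injective
      rw [OrderIso.apply_symm_apply]
      apply Subtype.ext
      rw [Finset.coe_orderIsoOfFin_apply]
      exact dwMatch_of_D p hp h
    rw [e1]
    exact emb_symm_eq' _ _ i (by simp [h])

lemma dwMatch_lt_U (p : DyckWord) (hp : p.semilength = n) {i : Fin (2*n)}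
    (h : dwFn p hp i = U) : i < dwMatch p hp i := by
  rw [dwMatch_of_U p hp h]
  set k := ((Finset.univ.filter fun j : Fin (2*n) => dwFn p hp j = U).orderIsoOfFin
        (card_dwU p hp)).symm ⟨i, by simp [h]⟩ with hk
  have : (Finset.univ.filter fun j : Fin (2*n) => dwFn p hp j = U).orderEmbOfFin
      (card_dwU p hp) k = i := by rw [hk]; exact emb_symm_eq' _ _ i (by simp [h])
  rw [← this]
  exact opener_lt_closer p hp k

lemma dwMatch_lt_D (p : DyckWord) (hp : p.semilength = n) {i : Fin (2*n)}
    (h : dwFn p hp i = D) : dwMatch p hp i < i := by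
  rw [dwMatch_of_D p hp h]
  set k := ((Finset.univ.filter fun j : Fin (2*n) => dwFn p hp j = D).orderIsoOfFin
        (card_dwD p hp)).symm ⟨i, by simp [h]⟩ with hk
  have : (Finset.univ.filter fun j : Fin (2*n) => dwFn p hp j = D).orderEmbOfFin
      (card_dwD p hp) k = i := by rw [hk]; exact emb_symm_eq' _ _ i (by simp [h])
  rw [← this]
  exact opener_lt_closer p hp k

lemma dwMatch_isMatching (p : DyckWord) (hp : p.semilength = n) :
    IsMatching (dwMatch p hp) := by
  refine ⟨dwMatch_involutive p hp, fun i => ?_⟩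
  rcases DyckStep.dichotomy (dwFn p hp i) with h | h
  · exact Fin.ne_of_gt (dwMatch_lt_U p hp h)
  · exact Fin.ne_of_lt (dwMatch_lt_D p hp h)

lemma dwMatch_mono (p : DyckWord) (hp : p.semilength = n) :
    ∀ a b : Fin (2*n), a < dwMatch p hp a → b < dwMatch p hp b → a < b →
      dwMatch p hp a < dwMatch p hp b := by
  intro a b ha hb hab
  have hga : dwFn p hp a = U := by
    rcases DyckStep.dichotomy (dwFn p hp a) with h | h
    · exact h
    · exact absurd (dwMatch_lt_D p hp h) (by omega)
  have hgb : dwFn p hp b = U := by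
    rcases DyckStep.dichotomy (dwFn p hp b) with h | h
    · exact h
    · exact absurd (dwMatch_lt_D p hp h) (by omega)
  rw [dwMatch_of_U p hp hga, dwMatch_of_U p hp hgb]
  apply ((Finset.univ.filter fun j : Fin (2*n) => dwFn p hp j = D).orderEmbOfFin
    (card_dwD p hp)).strictMono
  have : (⟨a, by simp [hga]⟩ : {x // x ∈ Finset.univ.filter fun j : Fin (2*n) => dwFn p hp j = U})
      < ⟨b, by simp [hgb]⟩ := hab
  exact ((Finset.univ.filter fun j : Fin (2*n) => dwFn p hp j = U).orderIsoOfFin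
    (card_dwU p hp)).symm.strictMono this

lemma wordFn_dwMatch (p : DyckWord) (hp : p.semilength = n) :
    wordFn (dwMatch p hp) = dwFn p hp := by
  funext i
  rcases DyckStep.dichotomy (dwFn p hp i) with h | h
  · rw [h]
    unfold wordFn
    rw [if_pos (dwMatch_lt_U p hp h)]
  · rw [h]
    unfold wordFn
    rw [if_neg (by have := dwMatch_lt_D p hp h; omega)]

end buildMatch


end AuxNN


theorem card_avoid_1221 (n : ℕ) :
    Nat.card {f : Fin (2 * n) → Fin (2 * n) // IsMatching f ∧ Avoids p1221 f} =
      catalan n := by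
  have hbij : Function.Bijective
      (fun x : {f : Fin (2*n) → Fin (2*n) // IsMatching f ∧ Avoids p1221 f} =>
        (⟨matchWord x.1 x.2.1, semilength_matchWord x.1 x.2.1⟩ :
          {p : DyckWord // p.semilength = n})) := by
    constructor
    · rintro ⟨f, hf, haf⟩ ⟨f', hf', haf'⟩ h
      simp only [Subtype.mk_eq_mk] at h ⊢
      have hlist : (matchWord f hf).toList = (matchWord f' hf').toList := by rw [h]
      have hw : wordFn f = wordFn f' := List.ofFn_injective hlist
      exact matching_word_inj hf hf' ((avoids_iff hf).mp haf) ((avoids_iff hf').mp haf') hw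
    · rintro ⟨p, hp⟩
      refine ⟨⟨dwMatch p hp, dwMatch_isMatching p hp,
        (avoids_iff (dwMatch_isMatching p hp)).mpr (dwMatch_mono p hp)⟩, ?_⟩
      simp only [Subtype.mk_eq_mk]
      apply DyckWord.ext
      show List.ofFn (wordFn (dwMatch p hp)) = p.toList
      rw [wordFn_dwMatch, ofFn_dwFn]
  rw [Nat.card_eq_of_bijective _ hbij, Nat.card_eq_fintype_card,
    DyckWord.card_dyckWord_semilength_eq_catalan]
end

section
/- For every n ≥ 1, the number of connected nonnesting matchings of [2n] equals the Catalan number C_{n-1}. -/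
open List DyckStep Finset

namespace CNN

variable {m k : ℕ}

/-- number of elements of `S` below `h` -/
def cnt {m : ℕ} (S : Finset (Fin m)) (h : ℕ) : ℕ :=
  (S.filter (fun x : Fin m => (x : ℕ) < h)).card

lemma downClosed_iff_lt_card (P : Fin k → Prop) [DecidablePred P]
    (hP : ∀ i j : Fin k, i ≤ j → P j → P i) (j : Fin k) :
    P j ↔ (j : ℕ) < (Finset.univ.filter P).card := by
  constructor
  · intro h
    have hsub : Finset.Iic j ⊆ Finset.univ.filter P := by
      intro i hi
      simp only [Finset.mem_Iic] at hi
      simp only [Finset.mem_filter, Finset.mem_univ, true_and]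
      exact hP i j hi h
    have := Finset.card_le_card hsub
    rw [Fin.card_Iic] at this
    omega
  · intro h
    by_contra hj
    have hsub : Finset.univ.filter P ⊆ Finset.Iio j := by
      intro i hi
      simp only [Finset.mem_filter, Finset.mem_univ, true_and] at hi
      simp only [Finset.mem_Iio]
      by_contra hij
      exact hj (hP j i (le_of_not_gt hij) hi)
    have := Finset.card_le_card hsub
    rw [Fin.card_Iio] at this
    omega

/-- rank lemma: the `j`-th element of `S` is `< h` iff `j < cnt S h`. -/
lemma orderEmbOfFin_lt_iff (S : Finset (Fin m)) (hS : S.card = k) (j : Fin k) (h : ℕ) :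
    ((S.orderEmbOfFin hS j : Fin m) : ℕ) < h ↔ (j : ℕ) < cnt S h := by
  have key := downClosed_iff_lt_card (fun j : Fin k => ((S.orderEmbOfFin hS j : Fin m) : ℕ) < h)
    (fun i j hij hj => lt_of_le_of_lt
      (Fin.le_def.mp ((S.orderEmbOfFin hS).monotone hij)) hj) j
  rw [key]
  have hcard : (Finset.univ.filter
      (fun j : Fin k => ((S.orderEmbOfFin hS j : Fin m) : ℕ) < h)).card = cnt S h := by
    apply Finset.card_bij (fun j _ => (S.orderEmbOfFin hS j : Fin m))
    · intro a ha
      simp only [Finset.mem_filter, Finset.mem_univ, true_and] at ha ⊢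
      exact ⟨S.orderEmbOfFin_mem hS a, ha⟩
    · intro a _ b _ hab
      exact (S.orderEmbOfFin hS).injective hab
    · intro b hb
      simp only [Finset.mem_filter] at hb
      have : b ∈ Set.range (S.orderEmbOfFin hS) := by
        rw [Finset.range_orderEmbOfFin]; exact hb.1
      obtain ⟨a, ha⟩ := this
      exact ⟨a, by simp [ha, hb.2], ha⟩
  rw [hcard]

lemma cnt_compl_add (S : Finset (Fin m)) (h : ℕ) (hh : h ≤ m) :
    cnt S h + cnt Sᶜ h = h := by
  unfold cnt
  rw [← Finset.card_union_of_disjoint (Finset.disjoint_filter_filter (disjoint_compl_right))]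
  have huniv : S.filter (fun x : Fin m => (x : ℕ) < h) ∪ Sᶜ.filter (fun x : Fin m => (x : ℕ) < h)
      = Finset.univ.filter (fun x : Fin m => (x : ℕ) < h) := by
    ext x
    simp only [Finset.mem_union, Finset.mem_filter, Finset.mem_compl, Finset.mem_univ, true_and]
    tauto
  rw [huniv]
  rcases Nat.eq_or_lt_of_le hh with rfl | hh'
  · rw [Finset.filter_true_of_mem (fun x _ => x.isLt)]
    simp
  · have : Finset.univ.filter (fun x : Fin m => (x : ℕ) < h) = Finset.Iio ⟨h, hh'⟩ := by
      ext x
      simp [Finset.mem_Iio, Fin.lt_def]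
    rw [this, Fin.card_Iio]

lemma cnt_eq_card (S : Finset (Fin m)) : cnt S m = S.card := by
  unfold cnt
  rw [Finset.filter_true_of_mem (fun x _ => x.isLt)]


/-- the nonnesting matching with opener set `S` -/
def matchOf (S : Finset (Fin m)) (hS : S.card = k) (hT : Sᶜ.card = k) : Fin m → Fin m :=
  fun i => if h : i ∈ S then Sᶜ.orderEmbOfFin hT ((S.orderIsoOfFin hS).symm ⟨i, h⟩)
           else S.orderEmbOfFin hS ((Sᶜ.orderIsoOfFin hT).symm ⟨i, Finset.mem_compl.mpr h⟩)

lemma matchOf_emb (S : Finset (Fin m)) (hS : S.card = k) (hT : Sᶜ.card = k) (j : Fin k) :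
    matchOf S hS hT (S.orderEmbOfFin hS j) = Sᶜ.orderEmbOfFin hT j := by
  have hm : S.orderEmbOfFin hS j ∈ S := S.orderEmbOfFin_mem hS j
  rw [matchOf, dif_pos hm]
  congr 1
  have : (⟨S.orderEmbOfFin hS j, hm⟩ : S) = S.orderIsoOfFin hS j :=
    Subtype.ext (S.coe_orderIsoOfFin_apply hS j).symm
  rw [this, OrderIso.symm_apply_apply]

lemma matchOf_emb' (S : Finset (Fin m)) (hS : S.card = k) (hT : Sᶜ.card = k) (j : Fin k) :
    matchOf S hS hT (Sᶜ.orderEmbOfFin hT j) = S.orderEmbOfFin hS j := by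
  have hm : Sᶜ.orderEmbOfFin hT j ∈ Sᶜ := Sᶜ.orderEmbOfFin_mem hT j
  rw [matchOf, dif_neg (Finset.mem_compl.mp hm)]
  congr 1
  have : (⟨Sᶜ.orderEmbOfFin hT j, Finset.mem_compl.mpr (Finset.mem_compl.mp hm)⟩ : (Sᶜ : Finset (Fin m))) = Sᶜ.orderIsoOfFin hT j :=
    Subtype.ext (Sᶜ.coe_orderIsoOfFin_apply hT j).symm
  rw [this, OrderIso.symm_apply_apply]

lemma exists_emb_of_mem {S : Finset (Fin m)} (hS : S.card = k) {i : Fin m} (hi : i ∈ S) :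
    ∃ j : Fin k, S.orderEmbOfFin hS j = i := by
  have : i ∈ Set.range (S.orderEmbOfFin hS) := by rw [Finset.range_orderEmbOfFin]; exact hi
  exact this

lemma matchOf_involutive (S : Finset (Fin m)) (hS : S.card = k) (hT : Sᶜ.card = k) :
    Function.Involutive (matchOf S hS hT) := by
  intro i
  by_cases h : i ∈ S
  · obtain ⟨j, rfl⟩ := exists_emb_of_mem hS h
    rw [matchOf_emb, matchOf_emb']
  · obtain ⟨j, rfl⟩ := exists_emb_of_mem hT (Finset.mem_compl.mpr h)
    rw [matchOf_emb', matchOf_emb]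

lemma matchOf_mem_compl (S : Finset (Fin m)) (hS : S.card = k) (hT : Sᶜ.card = k)
    {i : Fin m} (hi : i ∈ S) : matchOf S hS hT i ∈ Sᶜ := by
  obtain ⟨j, rfl⟩ := exists_emb_of_mem hS hi
  rw [matchOf_emb]
  exact Sᶜ.orderEmbOfFin_mem hT j

lemma matchOf_mem (S : Finset (Fin m)) (hS : S.card = k) (hT : Sᶜ.card = k)
    {i : Fin m} (hi : i ∈ Sᶜ) : matchOf S hS hT i ∈ S := by
  obtain ⟨j, rfl⟩ := exists_emb_of_mem hT hi
  rw [matchOf_emb']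
  exact S.orderEmbOfFin_mem hS j

lemma matchOf_ne (S : Finset (Fin m)) (hS : S.card = k) (hT : Sᶜ.card = k) (i : Fin m) :
    matchOf S hS hT i ≠ i := by
  by_cases h : i ∈ S
  · intro he
    have := matchOf_mem_compl S hS hT h
    rw [he] at this
    exact (Finset.mem_compl.mp this) h
  · intro he
    have := matchOf_mem S hS hT (Finset.mem_compl.mpr h)
    rw [he] at this
    exact h this

/-- Under prefix dominance, every element of `S` is an opener. -/
lemma emb_lt_emb_compl (S : Finset (Fin m)) (hS : S.card = k) (hT : Sᶜ.card = k)
    (hdom : ∀ h : ℕ, h ≤ m → cnt Sᶜ h ≤ cnt S h) (j : Fin k) :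
    (S.orderEmbOfFin hS j : Fin m) < Sᶜ.orderEmbOfFin hT j := by
  set t : Fin m := Sᶜ.orderEmbOfFin hT j with ht
  have h1 : (j : ℕ) < cnt Sᶜ ((t : ℕ) + 1) := by
    rw [← orderEmbOfFin_lt_iff Sᶜ hT j ((t : ℕ) + 1)]
    omega
  have h2 : (j : ℕ) < cnt S ((t : ℕ) + 1) := lt_of_lt_of_le h1 (hdom _ (by omega))
  have h3 := (orderEmbOfFin_lt_iff S hS j ((t : ℕ) + 1)).mpr h2
  have hne : (S.orderEmbOfFin hS j : Fin m) ≠ t := by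
    intro he
    have hmem := S.orderEmbOfFin_mem hS j
    rw [he] at hmem
    exact (Finset.mem_compl.mp (Sᶜ.orderEmbOfFin_mem hT j)) hmem
  rw [Fin.lt_def]
  rcases Nat.lt_or_ge ((S.orderEmbOfFin hS j : Fin m) : ℕ) (t : ℕ) with h | h
  · exact h
  · exfalso; exact hne (Fin.ext (by omega))

lemma matchOf_opener (S : Finset (Fin m)) (hS : S.card = k) (hT : Sᶜ.card = k)
    (hdom : ∀ h : ℕ, h ≤ m → cnt Sᶜ h ≤ cnt S h) {i : Fin m} (hi : i ∈ S) :
    i < matchOf S hS hT i := by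
  obtain ⟨j, rfl⟩ := exists_emb_of_mem hS hi
  rw [matchOf_emb]
  exact emb_lt_emb_compl S hS hT hdom j

lemma matchOf_closer (S : Finset (Fin m)) (hS : S.card = k) (hT : Sᶜ.card = k)
    (hdom : ∀ h : ℕ, h ≤ m → cnt Sᶜ h ≤ cnt S h) {i : Fin m} (hi : i ∈ Sᶜ) :
    matchOf S hS hT i < i := by
  obtain ⟨j, rfl⟩ := exists_emb_of_mem hT hi
  rw [matchOf_emb']
  exact emb_lt_emb_compl S hS hT hdom j

lemma matchOf_strictMonoOn (S : Finset (Fin m)) (hS : S.card = k) (hT : Sᶜ.card = k)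
    {i i' : Fin m} (hi : i ∈ S) (hi' : i' ∈ S) (hlt : i < i') :
    matchOf S hS hT i < matchOf S hS hT i' := by
  obtain ⟨j, rfl⟩ := exists_emb_of_mem hS hi
  obtain ⟨j', rfl⟩ := exists_emb_of_mem hS hi'
  rw [matchOf_emb, matchOf_emb]
  have : j < j' := by
    by_contra hle
    exact absurd ((S.orderEmbOfFin hS).monotone (le_of_not_gt hle)) (not_le.mpr hlt)
  exact (Sᶜ.orderEmbOfFin hT).strictMono this


lemma cnt_le_card (S : Finset (Fin m)) (h : ℕ) : cnt S h ≤ S.card :=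
  Finset.card_le_card (Finset.filter_subset _ _)

/-- matchOf avoids the nesting pattern. -/
lemma matchOf_avoids (S : Finset (Fin m)) (hS : S.card = k) (hT : Sᶜ.card = k)
    (hdom : ∀ h : ℕ, h ≤ m → cnt Sᶜ h ≤ cnt S h) :
    Avoids p1221 (matchOf S hS hT) := by
  rintro ⟨g, hg, hocc⟩
  have h0 : matchOf S hS hT (g 0) = g 3 := by simpa [p1221] using hocc 0
  have h1 : matchOf S hS hT (g 1) = g 2 := by simpa [p1221] using hocc 1
  have hg01 : g 0 < g 1 := hg (by decide)
  have hg23 : g 2 < g 3 := hg (by decide)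
  have hg13 : g 1 < g 3 := hg (by decide)
  have hg02 : g 0 < g 2 := hg (by decide)
  have hm0 : g 0 ∈ S := by
    by_contra h
    have := matchOf_closer S hS hT hdom (Finset.mem_compl.mpr h)
    rw [h0] at this
    exact absurd (lt_trans hg01 hg13) (not_lt.mpr this.le)
  have hg12 : g 1 < g 2 := hg (by decide)
  have hm1 : g 1 ∈ S := by
    by_contra h
    have := matchOf_closer S hS hT hdom (Finset.mem_compl.mpr h)
    rw [h1] at this
    exact absurd hg12 (not_lt.mpr this.le)
  have := matchOf_strictMonoOn S hS hT hm0 hm1 hg01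
  rw [h0, h1] at this
  exact absurd hg23 (not_lt.mpr this.le)

/-- connectivity criterion -/
lemma matchOf_connected (S : Finset (Fin m)) (hS : S.card = k) (hT : Sᶜ.card = k) (hm : 0 < m)
    (hc : ∀ h : ℕ, 0 < h → h < m → 2 * cnt S h ≠ h) :
    ConnectedMatching (matchOf S hS hT) := by
  refine ⟨hm, ?_⟩
  rintro ⟨h, hh0, hhm, hsplit⟩
  have hadd := cnt_compl_add S h (le_of_lt hhm)
  -- show cnt S h = cnt Sᶜ h
  have h1 : cnt S h ≤ cnt Sᶜ h := by
    by_contra hlt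
    push_neg at hlt
    have hb : cnt Sᶜ h < k := lt_of_lt_of_le hlt (hS ▸ cnt_le_card S h)
    set j : Fin k := ⟨cnt Sᶜ h, hb⟩
    have hjS : ((S.orderEmbOfFin hS j : Fin m) : ℕ) < h :=
      (orderEmbOfFin_lt_iff S hS j h).mpr hlt
    have := (hsplit (S.orderEmbOfFin hS j)).mp hjS
    rw [matchOf_emb] at this
    have := (orderEmbOfFin_lt_iff Sᶜ hT j h).mp this
    simp [j] at this
  have h2 : cnt Sᶜ h ≤ cnt S h := by
    by_contra hlt
    push_neg at hlt
    have hb : cnt S h < k := lt_of_lt_of_le hlt (hT ▸ cnt_le_card Sᶜ h)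
    set j : Fin k := ⟨cnt S h, hb⟩
    have hjT : ((Sᶜ.orderEmbOfFin hT j : Fin m) : ℕ) < h :=
      (orderEmbOfFin_lt_iff Sᶜ hT j h).mpr hlt
    have := (hsplit (Sᶜ.orderEmbOfFin hT j)).mp hjT
    rw [matchOf_emb'] at this
    have := (orderEmbOfFin_lt_iff S hS j h).mp this
    simp [j] at this
  exact hc h hh0 hhm (by omega)

lemma matchOf_connected_rev (S : Finset (Fin m)) (hS : S.card = k) (hT : Sᶜ.card = k)
    (hconn : ConnectedMatching (matchOf S hS hT)) :
    ∀ h : ℕ, 0 < h → h < m → 2 * cnt S h ≠ h := by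
  intro h hh0 hhm heq
  apply hconn.2
  refine ⟨h, hh0, hhm, ?_⟩
  have hadd := cnt_compl_add S h (le_of_lt hhm)
  have hSeq : cnt S h = cnt Sᶜ h := by omega
  intro i
  by_cases hi : i ∈ S
  · obtain ⟨j, rfl⟩ := exists_emb_of_mem hS hi
    rw [matchOf_emb, orderEmbOfFin_lt_iff S hS j h, orderEmbOfFin_lt_iff Sᶜ hT j h, hSeq]
  · obtain ⟨j, rfl⟩ := exists_emb_of_mem hT (Finset.mem_compl.mpr hi)
    rw [matchOf_emb', orderEmbOfFin_lt_iff Sᶜ hT j h, orderEmbOfFin_lt_iff S hS j h, hSeq]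

/-- opener set of a matching -/
def openers {m : ℕ} (f : Fin m → Fin m) : Finset (Fin m) :=
  Finset.univ.filter (fun i => i < f i)

lemma openers_compl {f : Fin m → Fin m} (hf : IsMatching f) :
    (openers f)ᶜ = Finset.univ.filter (fun i => f i < i) := by
  ext i
  have := hf.2 i
  simp only [openers, Finset.mem_compl, Finset.mem_filter, Finset.mem_univ, true_and, not_lt]
  constructor
  · intro h; exact lt_of_le_of_ne h (hf.2 i)
  · intro h; exact h.le

lemma card_openers {f : Fin m → Fin m} (hf : IsMatching f) :
    2 * (openers f).card = m := by
  have himg : (openers f).image f = (openers f)ᶜ := by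
    rw [openers_compl hf]
    ext j
    simp only [Finset.mem_image, openers, Finset.mem_filter, Finset.mem_univ, true_and]
    constructor
    · rintro ⟨i, hi, rfl⟩
      rw [hf.1 i]; exact hi
    · intro hj
      exact ⟨f j, by rw [hf.1 j]; exact hj, hf.1 j⟩
  have hcard : (openers f).card = (openers f)ᶜ.card := by
    rw [← himg, Finset.card_image_of_injective _ hf.1.injective]
  have := Finset.card_add_card_compl (openers f)
  simp only [Fintype.card_fin] at this
  omega

/-- nonnesting matchings are strictly monotone on openers -/
lemma nonnesting_strictMonoOn {f : Fin m → Fin m} (hf : IsMatching f) (hav : Avoids p1221 f)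
    {i i' : Fin m} (hi : i ∈ openers f) (hi' : i' ∈ openers f) (hlt : i < i') :
    f i < f i' := by
  simp only [openers, Finset.mem_filter, Finset.mem_univ, true_and] at hi hi'
  by_contra hge
  have hne : f i' ≠ f i := fun h => (ne_of_lt hlt) (hf.1.injective h.symm)
  have hlt2 : f i' < f i := lt_of_le_of_ne (le_of_not_gt hge) hne
  set g : Fin 4 → Fin m := ![i, i', f i', f i] with hgdef
  have hg : StrictMono g := by
    have h12 : i' < f i' := hi'
    intro a b hab
    fin_cases a <;> fin_cases b <;>
      simp only [hgdef, Matrix.cons_val_zero, Matrix.cons_val_one, Matrix.head_cons,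
        Matrix.cons_val_two, Matrix.tail_cons, Matrix.cons_val_three] <;>
      first
      | exact absurd hab (by decide)
      | exact hlt
      | exact lt_trans hlt h12
      | exact lt_trans (lt_trans hlt h12) hlt2
      | exact h12
      | exact lt_trans h12 hlt2
      | exact hlt2
  apply hav
  refine ⟨g, hg, ?_⟩
  intro p
  fin_cases p <;>
    simp only [hgdef, p1221, Matrix.cons_val_zero, Matrix.cons_val_one, Matrix.head_cons,
      Matrix.cons_val_two, Matrix.tail_cons, Matrix.cons_val_three, Fin.isValue]
  · rfl
  · rfl
  · exact hf.1 i'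
  · exact hf.1 i

/-- uniqueness: a nonnesting matching is `matchOf` of its opener set. -/
lemma eq_matchOf {f : Fin m → Fin m} (hf : IsMatching f) (hav : Avoids p1221 f)
    (hS : (openers f).card = k) (hT : (openers f)ᶜ.card = k) :
    f = matchOf (openers f) hS hT := by
  have hfun : (fun j : Fin k => f ((openers f).orderEmbOfFin hS j))
      = ⇑((openers f)ᶜ.orderEmbOfFin hT) := by
    apply Finset.orderEmbOfFin_unique hT
    · intro x
      have hm := (openers f).orderEmbOfFin_mem hS x
      rw [openers_compl hf]
      simp only [Finset.mem_filter, Finset.mem_univ, true_and]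
      simp only [openers, Finset.mem_filter, Finset.mem_univ, true_and] at hm
      rw [hf.1]
      exact hm
    · intro a b hab
      exact nonnesting_strictMonoOn hf hav ((openers f).orderEmbOfFin_mem hS a)
        ((openers f).orderEmbOfFin_mem hS b) ((openers f).orderEmbOfFin hS |>.strictMono hab)
  funext i
  by_cases hi : i ∈ openers f
  · obtain ⟨j, rfl⟩ := exists_emb_of_mem hS hi
    rw [matchOf_emb]
    exact congrFun hfun j
  · obtain ⟨j, rfl⟩ := exists_emb_of_mem hT (Finset.mem_compl.mpr hi)
    rw [matchOf_emb']
    have := congrFun hfun j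
    rw [← this, hf.1]


def wordOf (S : Finset (Fin m)) : List DyckStep :=
  List.ofFn (fun i : Fin m => if i ∈ S then U else D)

@[simp] lemma length_wordOf (S : Finset (Fin m)) : (wordOf S).length = m := by
  simp [wordOf]

lemma getElem_wordOf (S : Finset (Fin m)) (i : ℕ) (hi : i < m) :
    (wordOf S)[i]'(by simpa using hi) = if (⟨i, hi⟩ : Fin m) ∈ S then U else D := by
  simp [wordOf, List.getElem_ofFn]

lemma count_take_ofFn (g : Fin m → DyckStep) (x : DyckStep) (h : ℕ) :
    ((List.ofFn g).take h).count x
      = (Finset.univ.filter (fun i : Fin m => (i : ℕ) < h ∧ g i = x)).card := by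
  induction h with
  | zero =>
    simp only [List.take_zero, List.count_nil]
    symm
    rw [Finset.card_eq_zero, Finset.filter_eq_empty_iff]
    intro i _
    simp
  | succ h ih =>
    by_cases hm : h < m
    · rw [List.take_succ, List.count_append, ih]
      have hgd : (List.ofFn g)[h]? = some (g ⟨h, hm⟩) := by
        rw [List.getElem?_eq_getElem (by simpa using hm)]
        simp [List.getElem_ofFn]
      rw [hgd]
      have hfilter : (Finset.univ.filter (fun i : Fin m => (i : ℕ) < h + 1 ∧ g i = x))
          = (Finset.univ.filter (fun i : Fin m => (i : ℕ) < h ∧ g i = x))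
            ∪ (Finset.univ.filter (fun i : Fin m => (i : ℕ) = h ∧ g i = x)) := by
        ext i
        simp only [Finset.mem_union, Finset.mem_filter, Finset.mem_univ, true_and]
        by_cases hgx : g i = x <;> simp [hgx] <;> omega
      rw [hfilter, Finset.card_union_of_disjoint (by
        rw [Finset.disjoint_filter]
        intro i _ hi hi2
        omega)]
      congr 1
      by_cases hx : g ⟨h, hm⟩ = x
      · have : (Finset.univ.filter (fun i : Fin m => (i : ℕ) = h ∧ g i = x)) = {⟨h, hm⟩} := by
          ext i
          simp only [Finset.mem_filter, Finset.mem_univ, true_and, Finset.mem_singleton]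
          constructor
          · rintro ⟨h1, _⟩; exact Fin.ext h1
          · rintro rfl; exact ⟨rfl, hx⟩
        rw [this]
        simp [hx]
      · have : (Finset.univ.filter (fun i : Fin m => (i : ℕ) = h ∧ g i = x)) = ∅ := by
          rw [Finset.filter_eq_empty_iff]
          intro i _
          rintro ⟨h1, h2⟩
          exact hx (by rwa [show (⟨h, hm⟩ : Fin m) = i from Fin.ext h1.symm])
        rw [this]
        simp [hx, List.count_singleton]
    · have h1 : (List.ofFn g).length ≤ h := by simpa using by omega
      have h2 : (List.ofFn g).length ≤ h + 1 := by simpa using by omega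
      rw [List.take_of_length_le h2, ← List.take_of_length_le h1, ih]
      congr 1
      apply Finset.filter_congr
      intro i _
      have := i.isLt
      constructor <;> intro h' <;> exact ⟨by omega, h'.2⟩

lemma count_U_take_wordOf (S : Finset (Fin m)) (h : ℕ) :
    ((wordOf S).take h).count U = cnt S h := by
  rw [wordOf, count_take_ofFn]
  unfold cnt
  congr 1
  ext i
  simp only [Finset.mem_filter, Finset.mem_univ, true_and]
  by_cases hi : i ∈ S <;> simp [hi, and_comm]

lemma count_D_take_wordOf (S : Finset (Fin m)) (h : ℕ) :
    ((wordOf S).take h).count D = cnt Sᶜ h := by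
  rw [wordOf, count_take_ofFn]
  unfold cnt
  congr 1
  ext i
  simp only [Finset.mem_filter, Finset.mem_compl, Finset.mem_univ, true_and]
  by_cases hi : i ∈ S <;> simp [hi, and_comm]

/-- decomposition of a word starting with U and ending with D -/
lemma word_decomp (l : List DyckStep) (hlen : 2 ≤ l.length)
    (hhead : l.head? = some U) (hlast : l.getLast? = some D) :
    l = U :: ((l.drop 1).dropLast ++ [D]) := by
  obtain ⟨a, t, rfl⟩ : ∃ a t, l = a :: t := by
    cases l with
    | nil => simp at hlen
    | cons a t => exact ⟨a, t, rfl⟩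
  have ht : t ≠ [] := by
    intro h
    subst h
    simp at hlen
  have ha : a = U := by simpa using hhead
  have hl : t.getLast ht = D := by
    have h1 := List.getLast?_eq_getLast (l := a :: t) (by simp)
    rw [hlast] at h1
    have h2 : (a :: t).getLast (by simp) = t.getLast ht := List.getLast_cons ht
    rw [h2] at h1
    exact (Option.some_injective _ h1.symm)
  subst ha
  congr 1
  simp only [List.drop_one, List.tail_cons]
  conv_lhs => rw [← List.dropLast_concat_getLast ht, hl]

lemma cnt_zero (S : Finset (Fin m)) : cnt S 0 = 0 := by
  unfold cnt
  rw [Finset.card_eq_zero, Finset.filter_eq_empty_iff]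
  intro i _
  omega

lemma matching_dominance {f : Fin m → Fin m} (hf : IsMatching f) (h : ℕ) :
    cnt (openers f)ᶜ h ≤ cnt (openers f) h := by
  unfold cnt
  apply Finset.card_le_card_of_injOn f
  · intro i hi
    simp only [Finset.mem_coe, Finset.mem_filter] at hi ⊢
    obtain ⟨hi1, hi2⟩ := hi
    rw [openers_compl hf] at hi1
    simp only [Finset.mem_filter, Finset.mem_univ, true_and] at hi1
    refine ⟨?_, lt_trans (Fin.lt_def.mp hi1) hi2⟩
    simp only [openers, Finset.mem_filter, Finset.mem_univ, true_and]
    rw [hf.1 i]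
    exact hi1
  · exact Set.injOn_of_injective hf.1.injective

lemma take_UconsD (q : List DyckStep) (i : ℕ) (hi : i ≤ q.length) :
    (U :: (q ++ [D])).take (i+1) = U :: q.take i := by
  rw [List.take_succ_cons, List.take_append_of_le_length hi]

lemma count_UconsD_U (q : List DyckStep) (i : ℕ) (hi : i ≤ q.length) :
    ((U :: (q ++ [D])).take (i+1)).count U = (q.take i).count U + 1 := by
  rw [take_UconsD q i hi]
  simp [List.count_cons]

lemma count_UconsD_D (q : List DyckStep) (i : ℕ) (hi : i ≤ q.length) :
    ((U :: (q ++ [D])).take (i+1)).count D = (q.take i).count D := by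
  rw [take_UconsD q i hi]
  simp [List.count_cons]

lemma count_UconsD_U_full (q : List DyckStep) :
    (U :: (q ++ [D])).count U = q.count U + 1 := by
  simp [List.count_cons, List.count_append]

lemma count_UconsD_D_full (q : List DyckStep) :
    (U :: (q ++ [D])).count D = q.count D + 1 := by
  simp [List.count_cons, List.count_append]

lemma openers_matchOf (S : Finset (Fin m)) (hS : S.card = k) (hT : Sᶜ.card = k)
    (hdom : ∀ h : ℕ, h ≤ m → cnt Sᶜ h ≤ cnt S h) :
    openers (matchOf S hS hT) = S := by
  ext i
  simp only [openers, Finset.mem_filter, Finset.mem_univ, true_and]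
  constructor
  · intro hlt
    by_contra hmem
    exact absurd hlt (not_lt.mpr (matchOf_closer S hS hT hdom (Finset.mem_compl.mpr hmem)).le)
  · intro hmem
    exact matchOf_opener S hS hT hdom hmem

lemma filter_wordOf (S : Finset (Fin m)) :
    Finset.univ.filter (fun i : Fin m => (wordOf S).getD i.val D = U) = S := by
  ext i
  simp only [Finset.mem_filter, Finset.mem_univ, true_and]
  rw [List.getD_eq_getElem _ _ (by simpa using i.isLt), getElem_wordOf S i.val i.isLt]
  by_cases hi : i ∈ S
  · simp [Fin.eta, hi]
  · simp [Fin.eta, hi]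

/-- The opener set extracted from a Dyck word of semilength `n-1`. -/
def dyckSet (n : ℕ) (p : DyckWord) : Finset (Fin (2*n)) :=
  Finset.univ.filter (fun i : Fin (2*n) => (U :: (p.toList ++ [D])).getD i.val D = U)

lemma good_of_dyck (n : ℕ) (hn : 1 ≤ n) (p : DyckWord) (hp : p.semilength = n - 1) :
    wordOf (dyckSet n p) = U :: (p.toList ++ [D]) ∧
    (dyckSet n p).card = n ∧ (dyckSet n p)ᶜ.card = n ∧
    (∀ h : ℕ, h ≤ 2*n → cnt (dyckSet n p)ᶜ h ≤ cnt (dyckSet n p) h) ∧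
    (∀ h : ℕ, 0 < h → h < 2*n → 2 * cnt (dyckSet n p) h ≠ h) := by
  have hU : p.toList.count U = n - 1 := hp
  have hD : p.toList.count D = n - 1 := by
    rw [← DyckWord.semilength_eq_count_D, hp]
  have hlen : p.toList.length = 2*(n-1) := by
    rw [← p.two_mul_semilength_eq_length, hp]
  set w : List DyckStep := U :: (p.toList ++ [D]) with hw
  have hlw : w.length = 2*n := by simp [hw, hlen]; omega
  have hword : wordOf (dyckSet n p) = w := by
    apply List.ext_getElem (by simp [hlw])
    intro i h1 h2
    have hival : i < 2*n := by simpa using h1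
    rw [getElem_wordOf _ i hival]
    simp only [dyckSet, Finset.mem_filter, Finset.mem_univ, true_and]
    rw [List.getD_eq_getElem _ _ h2]
    rcases (w[i]'h2).dichotomy with h | h <;> simp [h]
  refine ⟨hword, ?_⟩
  have hcnt : ∀ h : ℕ, cnt (dyckSet n p) h = ((w.take h).count U) := by
    intro h
    rw [← count_U_take_wordOf, hword]
  have hcntc : ∀ h : ℕ, cnt (dyckSet n p)ᶜ h = ((w.take h).count D) := by
    intro h
    rw [← count_D_take_wordOf, hword]
  have hScard : (dyckSet n p).card = n := by
    rw [← cnt_eq_card, hcnt, List.take_of_length_le (le_of_eq hlw), hw, count_UconsD_U_full, hU]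
    omega
  have hTcard : (dyckSet n p)ᶜ.card = n := by
    have := Finset.card_add_card_compl (dyckSet n p)
    simp only [Fintype.card_fin] at this
    omega
  refine ⟨hScard, hTcard, ?_, ?_⟩
  · intro h hh
    rcases Nat.eq_zero_or_pos h with rfl | hpos
    · rw [cnt_zero, cnt_zero]
    obtain ⟨i, rfl⟩ : ∃ i, h = i + 1 := ⟨h - 1, by omega⟩
    by_cases hip : i ≤ p.toList.length
    · rw [hcnt, hcntc, hw, count_UconsD_U p.toList i hip, count_UconsD_D p.toList i hip]
      have := p.count_D_le_count_U i
      omega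
    · have hi2 : i + 1 = 2*n := by omega
      have hsum := cnt_compl_add (dyckSet n p) (i+1) (by omega)
      have hcS : cnt (dyckSet n p) (i+1) = n := by
        rw [hi2, cnt_eq_card, hScard]
      omega
  · intro h h0 hlt heq
    obtain ⟨i, rfl⟩ : ∃ i, h = i + 1 := ⟨h - 1, by omega⟩
    have hip : i ≤ p.toList.length := by omega
    have hsum := cnt_compl_add (dyckSet n p) (i+1) (by omega)
    rw [hcnt, hcntc, hw, count_UconsD_U p.toList i hip, count_UconsD_D p.toList i hip] at hsum
    rw [hcnt, hw, count_UconsD_U p.toList i hip] at heq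
    have := p.count_D_le_count_U i
    omega

/-- The interior word of a matching. -/
def qOf (n : ℕ) (f : Fin (2*n) → Fin (2*n)) : List DyckStep :=
  ((wordOf (openers f)).drop 1).dropLast

lemma qOf_spec (n : ℕ) (hn : 1 ≤ n) (f : Fin (2*n) → Fin (2*n))
    (hf : IsMatching f) (hav : Avoids p1221 f) (hconn : ConnectedMatching f) :
    wordOf (openers f) = U :: (qOf n f ++ [D]) ∧
    (qOf n f).count U = n - 1 ∧ (qOf n f).count D = n - 1 ∧
    (∀ i : ℕ, ((qOf n f).take i).count D ≤ ((qOf n f).take i).count U) := by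
  set S := openers f with hSdef
  have hS : S.card = n := by
    have := card_openers hf
    rw [← hSdef] at this
    omega
  have hT : Sᶜ.card = n := by
    have := Finset.card_add_card_compl S
    simp only [Fintype.card_fin] at this
    omega
  have hdom : ∀ h : ℕ, h ≤ 2*n → cnt Sᶜ h ≤ cnt S h := fun h _ => matching_dominance hf h
  have hfeq : f = matchOf S hS hT := eq_matchOf hf hav hS hT
  have hc : ∀ h : ℕ, 0 < h → h < 2*n → 2 * cnt S h ≠ h :=
    matchOf_connected_rev S hS hT (by rw [← hfeq]; exact hconn)
  have h0S : (⟨0, by omega⟩ : Fin (2*n)) ∈ S := by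
    simp only [hSdef, openers, Finset.mem_filter, Finset.mem_univ, true_and]
    have hne := hf.2 ⟨0, by omega⟩
    have hv : (f ⟨0, by omega⟩).val ≠ 0 := fun h => hne (Fin.ext h)
    exact Fin.lt_def.mpr (by simpa using Nat.pos_of_ne_zero hv)
  have hlastS : (⟨2*n-1, by omega⟩ : Fin (2*n)) ∉ S := by
    simp only [hSdef, openers, Finset.mem_filter, Finset.mem_univ, true_and]
    intro hcon
    have := (f ⟨2*n-1, by omega⟩).isLt
    rw [Fin.lt_def] at hcon
    simp only at hcon
    omega
  have hlw : (wordOf S).length = 2*n := length_wordOf S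
  have hne : wordOf S ≠ [] := by
    intro h
    rw [← List.length_eq_zero_iff] at h
    omega
  have hhead : (wordOf S).head? = some U := by
    rw [List.head?_eq_getElem?, List.getElem?_eq_getElem (by omega)]
    rw [getElem_wordOf S 0 (by omega), if_pos h0S]
  have hlast : (wordOf S).getLast? = some D := by
    rw [List.getLast?_eq_getElem?, hlw, List.getElem?_eq_getElem (by rw [hlw]; omega)]
    congr 1
    rw [getElem_wordOf S (2*n-1) (by omega), if_neg hlastS]
  have hdecomp : wordOf S = U :: (qOf n f ++ [D]) :=
    word_decomp (wordOf S) (by omega) hhead hlast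
  have hqlen : (qOf n f).length = 2*n - 2 := by
    have := congrArg List.length hdecomp
    simp only [List.length_cons, List.length_append, List.length_singleton,
      List.length_nil] at this
    rw [hlw] at this
    omega
  have hcnt : ∀ h : ℕ, cnt S h = (((U :: (qOf n f ++ [D])).take h).count U) := by
    intro h
    rw [← count_U_take_wordOf, hdecomp]
  have hcntc : ∀ h : ℕ, cnt Sᶜ h = (((U :: (qOf n f ++ [D])).take h).count D) := by
    intro h
    rw [← count_D_take_wordOf, hdecomp]
  have hcU : (qOf n f).count U = n - 1 := by
    have h1 : cnt S (2*n) = n := by rw [cnt_eq_card, hS]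
    rw [hcnt, List.take_of_length_le (by simp [hqlen]; omega), count_UconsD_U_full] at h1
    omega
  have hcD : (qOf n f).count D = n - 1 := by
    have h1 := cnt_compl_add S (2*n) (le_refl _)
    have h2 : cnt S (2*n) = n := by rw [cnt_eq_card, hS]
    rw [hcntc, List.take_of_length_le (by simp [hqlen]; omega), count_UconsD_D_full] at h1
    omega
  refine ⟨hdecomp, hcU, hcD, ?_⟩
  intro i
  by_cases hip : i ≤ (qOf n f).length
  · have hsum := cnt_compl_add S (i+1) (by omega)
    have hdom' := hdom (i+1) (by omega)
    have hc' := hc (i+1) (by omega) (by omega)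
    rw [hcnt, count_UconsD_U _ i hip] at hsum hdom' hc'
    rw [hcntc, count_UconsD_D _ i hip] at hsum hdom'
    omega
  · rw [List.take_of_length_le (by omega), hcU, hcD]

/-- `matchOf` with the cardinality proofs bundled away. -/
def matchOfN {n : ℕ} (S : Finset (Fin (2*n))) : Fin (2*n) → Fin (2*n) :=
  if h : S.card = n ∧ Sᶜ.card = n then matchOf S h.1 h.2 else id

lemma matchOfN_eq {n : ℕ} {S : Finset (Fin (2*n))} (hS : S.card = n) (hT : Sᶜ.card = n) :
    matchOfN S = matchOf S hS hT := dif_pos ⟨hS, hT⟩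

def phi (n : ℕ) (hn : 1 ≤ n)
    (fs : {f : Fin (2*n) → Fin (2*n) // IsMatching f ∧ Avoids p1221 f ∧ ConnectedMatching f}) :
    {p : DyckWord // p.semilength = n - 1} :=
  ⟨⟨qOf n fs.1,
    by have h := qOf_spec n hn fs.1 fs.2.1 fs.2.2.1 fs.2.2.2; rw [h.2.1, h.2.2.1],
    fun i => (qOf_spec n hn fs.1 fs.2.1 fs.2.2.1 fs.2.2.2).2.2.2 i⟩,
   (qOf_spec n hn fs.1 fs.2.1 fs.2.2.1 fs.2.2.2).2.1⟩

def psi (n : ℕ) (hn : 1 ≤ n) (ps : {p : DyckWord // p.semilength = n - 1}) :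
    {f : Fin (2*n) → Fin (2*n) // IsMatching f ∧ Avoids p1221 f ∧ ConnectedMatching f} :=
  ⟨matchOfN (dyckSet n ps.1), by
    obtain ⟨hw, hS, hT, hdom, hc⟩ := good_of_dyck n hn ps.1 ps.2
    rw [matchOfN_eq hS hT]
    exact ⟨⟨matchOf_involutive _ _ _, matchOf_ne _ _ _⟩, matchOf_avoids _ _ _ hdom,
      matchOf_connected _ _ _ (by omega) hc⟩⟩

lemma psi_phi (n : ℕ) (hn : 1 ≤ n) : ∀ fs, psi n hn (phi n hn fs) = fs := by
  rintro ⟨f, hf, hav, hconn⟩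
  apply Subtype.ext
  have hd := qOf_spec n hn f hf hav hconn
  have hS : (openers f).card = n := by
    have := card_openers hf
    omega
  have hT : (openers f)ᶜ.card = n := by
    have := Finset.card_add_card_compl (openers f)
    simp only [Fintype.card_fin] at this
    omega
  have hset : dyckSet n (phi n hn ⟨f, hf, hav, hconn⟩).1 = openers f := by
    show Finset.univ.filter
        (fun i : Fin (2*n) => (U :: (qOf n f ++ [D])).getD i.val D = U) = openers f
    rw [← hd.1]
    exact filter_wordOf _
  show matchOfN (dyckSet n (phi n hn ⟨f, hf, hav, hconn⟩).1) = f
  rw [hset, matchOfN_eq hS hT]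
  exact (eq_matchOf hf hav hS hT).symm

lemma phi_psi (n : ℕ) (hn : 1 ≤ n) : ∀ ps, phi n hn (psi n hn ps) = ps := by
  rintro ⟨p, hp⟩
  apply Subtype.ext
  apply DyckWord.ext
  obtain ⟨hw, hS, hT, hdom, hc⟩ := good_of_dyck n hn p hp
  show ((wordOf (openers (matchOfN (dyckSet n p)))).drop 1).dropLast = p.toList
  rw [matchOfN_eq hS hT, openers_matchOf _ hS hT hdom, hw]
  simp

end CNN

theorem card_connected_nonnesting (n : ℕ) (hn : 1 ≤ n) :
    Nat.card {f : Fin (2 * n) → Fin (2 * n) //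
        IsMatching f ∧ Avoids p1221 f ∧ ConnectedMatching f} =
      catalan (n - 1) := by
  rw [Nat.card_congr (Equiv.mk (CNN.phi n hn) (CNN.psi n hn) (CNN.psi_phi n hn)
    (CNN.phi_psi n hn)), Nat.card_eq_fintype_card,
    DyckWord.card_dyckWord_semilength_eq_catalan]
end
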